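/- Let ℓ₂^m be a complex Hilbert space with m ≥ 3, and 1 ≤ k < m. Define T_i e_j = 0 for j < m and T_i e_m = e_i/√k, i = 1,...,k, and 𝒯 = (T_1,...,T_k). Then ‖𝒯‖₂ = 1 and w₂(𝒯) = 1/(2√k). Consequently n_{(2,k)}(ℓ₂^m) = 1/(2√k), and also n_{(2,k)}(ℓ₂) = 1/(2√k). -/

import Mathlib

open scoped ENNReal InnerProductSpace ComplexConjugate

set_option maxHeartbeats 1000000

noncomputable section

/-- The set Π_X of pairs (x, x*) with ‖x‖ = 1, ‖x*‖ = 1 and x*(x) = 1. -/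
def dualPairs (𝕜 X : Type*) [RCLike 𝕜] [NormedAddCommGroup X] [NormedSpace 𝕜 X] :
    Set (X × (X →L[𝕜] 𝕜)) :=
  {q | ‖q.1‖ = 1 ∧ ‖q.2‖ = 1 ∧ q.2 q.1 = 1}

/-- Numerical range of an operator. -/
def numRange {𝕜 X : Type*} [RCLike 𝕜] [NormedAddCommGroup X] [NormedSpace 𝕜 X]
    (T : X →L[𝕜] X) : Set 𝕜 :=
  {c | ∃ q ∈ dualPairs 𝕜 X, c = q.2 (T q.1)}

/-- Numerical radius of an operator. -/
def numRadius {𝕜 X : Type*} [RCLike 𝕜] [NormedAddCommGroup X] [NormedSpace 𝕜 X]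
    (T : X →L[𝕜] X) : ℝ :=
  sSup {r | ∃ q ∈ dualPairs 𝕜 X, r = ‖q.2 (T q.1)‖}

/-- Joint numerical range of a k-tuple of operators. -/
def jointNumRange {𝕜 X : Type*} [RCLike 𝕜] [NormedAddCommGroup X] [NormedSpace 𝕜 X]
    {k : ℕ} (T : Fin k → X →L[𝕜] X) : Set (Fin k → 𝕜) :=
  {v | ∃ q ∈ dualPairs 𝕜 X, v = fun i => q.2 (T i q.1)}

/-- The p-th joint numerical radius of a k-tuple of operators. -/
def jointNumRadius {𝕜 X : Type*} [RCLike 𝕜] [NormedAddCommGroup X] [NormedSpace 𝕜 X]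
    (p : ℝ) {k : ℕ} (T : Fin k → X →L[𝕜] X) : ℝ :=
  sSup {r | ∃ q ∈ dualPairs 𝕜 X, r = (∑ i, ‖q.2 (T i q.1)‖ ^ p) ^ (1 / p)}

/-- The p-th joint operator norm of a k-tuple of operators. -/
def jointOpNorm {𝕜 X Y : Type*} [RCLike 𝕜] [NormedAddCommGroup X] [NormedSpace 𝕜 X]
    [NormedAddCommGroup Y] [NormedSpace 𝕜 Y]
    (p : ℝ) {k : ℕ} (T : Fin k → X →L[𝕜] Y) : ℝ :=
  sSup {r | ∃ x : X, ‖x‖ = 1 ∧ r = (∑ i, ‖T i x‖ ^ p) ^ (1 / p)}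

/-- The numerical index of a space. -/
def numIndex (𝕜 X : Type*) [RCLike 𝕜] [NormedAddCommGroup X] [NormedSpace 𝕜 X] : ℝ :=
  sInf {r | ∃ T : X →L[𝕜] X, ‖T‖ = 1 ∧ r = numRadius T}

/-- The (p,k)-th joint numerical index of a space. -/
def jointNumIndex (p : ℝ) (k : ℕ) (𝕜 X : Type*) [RCLike 𝕜] [NormedAddCommGroup X]
    [NormedSpace 𝕜 X] : ℝ :=
  sInf {r | ∃ T : Fin k → X →L[𝕜] X, jointOpNorm p T = 1 ∧ r = jointNumRadius p T}

variable {H : Type*} [NormedAddCommGroup H] [InnerProductSpace ℂ H] [CompleteSpace H]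

lemma dualPair_apply {q : H × (H →L[ℂ] ℂ)} (hq : q ∈ dualPairs ℂ H) (v : H) :
    q.2 v = ⟪q.1, v⟫_ℂ := by
  obtain ⟨h1, h2, h3⟩ := hq
  set y := (InnerProductSpace.toDual ℂ H).symm q.2 with hy
  have hyq : ∀ w, q.2 w = ⟪y, w⟫_ℂ := by
    intro w; rw [hy]; simp [InnerProductSpace.toDual_symm_apply]
  have hny : ‖y‖ = 1 := by
    have := (InnerProductSpace.toDual ℂ H).symm.norm_map q.2
    rw [← hy] at this; rw [this, h2]
  have h4 : ⟪y, q.1⟫_ℂ = 1 := by rw [← hyq, h3]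
  rw [hyq, (inner_eq_one_iff_of_norm_eq_one hny h1).mp h4]

omit [CompleteSpace H] in
lemma unit_mem_dualPairs {x : H} (hx : ‖x‖ = 1) : (x, innerSL ℂ x) ∈ dualPairs ℂ H := by
  refine ⟨hx, ?_, ?_⟩
  · rw [innerSL_apply_norm, hx]
  · simp [innerSL_apply_apply, inner_self_eq_norm_sq_to_K, hx]

private lemma sum_sq_half {k : ℕ} (f : Fin k → ℝ) :
    (∑ i, f i ^ (2:ℝ)) ^ (1/(2:ℝ)) = Real.sqrt (∑ i, f i ^ 2) := by
  rw [Real.sqrt_eq_rpow]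
  congr 1
  exact Finset.sum_congr rfl fun i _ => Real.rpow_two (f i)

section Tuple

variable {k : ℕ} (g : Fin (k+1) → H) (S : Fin k → H →L[ℂ] H)

omit [CompleteSpace H] in
lemma tuple_opNorm (hk : 0 < k) (hg : Orthonormal ℂ g)
    (hS : ∀ i x, S i x = (⟪g (Fin.last k), x⟫_ℂ * ((Real.sqrt k)⁻¹ : ℝ)) • g i.castSucc) :
    jointOpNorm 2 S = 1 := by
  set c : ℝ := (Real.sqrt k)⁻¹ with hc
  have hkpos : (0:ℝ) < (k:ℝ) := by exact_mod_cast hk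
  have hsk : (0:ℝ) < Real.sqrt k := Real.sqrt_pos.mpr hkpos
  have hc0 : 0 ≤ c := by positivity
  have hkc : (k:ℝ) * c ^ 2 = 1 := by
    rw [hc, inv_pow, Real.sq_sqrt hkpos.le, mul_inv_cancel₀ hkpos.ne']
  have hnorm : ∀ (x : H) i, ‖S i x‖ = ‖⟪g (Fin.last k), x⟫_ℂ‖ * c := by
    intro x i
    rw [hS, norm_smul, hg.1 i.castSucc, mul_one, norm_mul, Complex.norm_real,
      Real.norm_eq_abs, abs_of_nonneg hc0]
  have hval : ∀ x : H, (∑ i, ‖S i x‖ ^ (2:ℝ)) ^ (1/(2:ℝ)) = ‖⟪g (Fin.last k), x⟫_ℂ‖ := by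
    intro x
    rw [sum_sq_half]
    have : ∑ i, ‖S i x‖ ^ 2 = ‖⟪g (Fin.last k), x⟫_ℂ‖ ^ 2 := by
      simp only [hnorm x]
      rw [Finset.sum_const, Finset.card_univ, Fintype.card_fin, nsmul_eq_mul, mul_pow]
      nlinarith [hkc]
    rw [this, Real.sqrt_sq (norm_nonneg _)]
  have hfnorm : ‖g (Fin.last k)‖ = 1 := hg.1 _
  have hmem : (1:ℝ) ∈ {r | ∃ x : H, ‖x‖ = 1 ∧ r = (∑ i, ‖S i x‖ ^ (2:ℝ)) ^ (1/(2:ℝ))} := by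
    refine ⟨g (Fin.last k), hfnorm, ?_⟩
    rw [hval]
    simp [inner_self_eq_norm_sq_to_K, hfnorm]
  refine le_antisymm (csSup_le ⟨1, hmem⟩ ?_) (le_csSup ⟨1, ?_⟩ hmem)
  · rintro r ⟨x, hx, rfl⟩
    rw [hval]
    calc ‖⟪g (Fin.last k), x⟫_ℂ‖ ≤ ‖g (Fin.last k)‖ * ‖x‖ := norm_inner_le_norm _ _
      _ = 1 := by rw [hfnorm, hx, mul_one]
  · rintro r ⟨x, hx, rfl⟩
    rw [hval]
    calc ‖⟪g (Fin.last k), x⟫_ℂ‖ ≤ ‖g (Fin.last k)‖ * ‖x‖ := norm_inner_le_norm _ _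
      _ = 1 := by rw [hfnorm, hx, mul_one]


lemma tuple_numRadius (hk : 0 < k) (hg : Orthonormal ℂ g)
    (hS : ∀ i x, S i x = (⟪g (Fin.last k), x⟫_ℂ * ((Real.sqrt k)⁻¹ : ℝ)) • g i.castSucc) :
    jointNumRadius 2 S = 1 / (2 * Real.sqrt k) := by
  obtain ⟨c, hc⟩ : ∃ c : ℝ, c = (Real.sqrt k)⁻¹ := ⟨_, rfl⟩
  obtain ⟨f, hfdef⟩ : ∃ f : H, f = g (Fin.last k) := ⟨_, rfl⟩
  rw [← hfdef, ← hc] at hS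
  have hkpos : (0:ℝ) < (k:ℝ) := by exact_mod_cast hk
  have hsk : (0:ℝ) < Real.sqrt k := Real.sqrt_pos.mpr hkpos
  have hc0 : 0 ≤ c := by rw [hc]; positivity
  have hfnorm : ‖f‖ = 1 := by rw [hfdef]; exact hg.1 _
  have htarget : 1 / (2 * Real.sqrt k) = c / 2 := by
    rw [hc]; field_simp
  have hval : ∀ q ∈ dualPairs ℂ H,
      (∑ i, ‖q.2 (S i q.1)‖ ^ (2:ℝ)) ^ (1/(2:ℝ))
        = (‖⟪f, q.1⟫_ℂ‖ * c) * Real.sqrt (∑ i : Fin k, ‖⟪q.1, g i.castSucc⟫_ℂ‖ ^ 2) := by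
    intro q hq
    rw [sum_sq_half]
    have hterm : ∀ i, ‖q.2 (S i q.1)‖ = (‖⟪f, q.1⟫_ℂ‖ * c) * ‖⟪q.1, g i.castSucc⟫_ℂ‖ := by
      intro i
      rw [dualPair_apply hq, hS, inner_smul_right, norm_mul, norm_mul, Complex.norm_real,
        Real.norm_eq_abs, abs_of_nonneg hc0]
    simp only [hterm]
    have hfact : (∑ i : Fin k, ((‖⟪f, q.1⟫_ℂ‖ * c) * ‖⟪q.1, g i.castSucc⟫_ℂ‖) ^ 2)
        = (‖⟪f, q.1⟫_ℂ‖ * c)^2 * ∑ i : Fin k, ‖⟪q.1, g i.castSucc⟫_ℂ‖ ^ 2 := by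
      rw [Finset.mul_sum]; exact Finset.sum_congr rfl fun i _ => by ring
    rw [hfact, Real.sqrt_mul (by positivity), Real.sqrt_sq (by positivity)]
  have hub : ∀ q ∈ dualPairs ℂ H,
      (∑ i, ‖q.2 (S i q.1)‖ ^ (2:ℝ)) ^ (1/(2:ℝ)) ≤ c / 2 := by
    intro q hq
    rw [hval q hq]
    have hA0 : (0:ℝ) ≤ ∑ i : Fin k, ‖⟪q.1, g i.castSucc⟫_ℂ‖ ^ 2 :=
      Finset.sum_nonneg fun i _ => by positivity
    have hb0 : (0:ℝ) ≤ ‖⟪f, q.1⟫_ℂ‖ := norm_nonneg _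
    have hbessel : (∑ i : Fin k, ‖⟪q.1, g i.castSucc⟫_ℂ‖ ^ 2) + ‖⟪f, q.1⟫_ℂ‖ ^ 2 ≤ 1 := by
      have h1 := hg.sum_inner_products_le (s := Finset.univ) q.1
      rw [Fin.sum_univ_castSucc] at h1
      have h2 : ∀ i : Fin k, ‖⟪q.1, g i.castSucc⟫_ℂ‖ = ‖⟪g i.castSucc, q.1⟫_ℂ‖ := by
        intro i; rw [← inner_conj_symm]; exact RCLike.norm_conj _
      have h3 : ‖⟪f, q.1⟫_ℂ‖ = ‖⟪g (Fin.last k), q.1⟫_ℂ‖ := by rw [hfdef]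
      simp only [h2, h3]
      have hq1 : ‖q.1‖ = 1 := hq.1
      calc (∑ i : Fin k, ‖⟪g i.castSucc, q.1⟫_ℂ‖ ^ 2) + ‖⟪g (Fin.last k), q.1⟫_ℂ‖ ^ 2
          ≤ ‖q.1‖ ^ 2 := h1
        _ = 1 := by rw [hq1]; norm_num
    have hgm : ‖⟪f, q.1⟫_ℂ‖ * Real.sqrt (∑ i : Fin k, ‖⟪q.1, g i.castSucc⟫_ℂ‖ ^ 2) ≤ 1 / 2 := by
      have h2ab := two_mul_le_add_sq ‖⟪f, q.1⟫_ℂ‖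
        (Real.sqrt (∑ i : Fin k, ‖⟪q.1, g i.castSucc⟫_ℂ‖ ^ 2))
      rw [Real.sq_sqrt hA0] at h2ab
      nlinarith [h2ab, hbessel]
    calc (‖⟪f, q.1⟫_ℂ‖ * c) * Real.sqrt (∑ i : Fin k, ‖⟪q.1, g i.castSucc⟫_ℂ‖ ^ 2)
        = c * (‖⟪f, q.1⟫_ℂ‖ * Real.sqrt (∑ i : Fin k, ‖⟪q.1, g i.castSucc⟫_ℂ‖ ^ 2)) := by ring
      _ ≤ c * (1/2) := mul_le_mul_of_nonneg_left hgm hc0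
      _ = c / 2 := by ring
  -- the optimal vector
  have hi₀ : (0:ℕ) < k := hk
  obtain ⟨i₀, hi0⟩ : ∃ i₀ : Fin k, i₀ = ⟨0, hk⟩ := ⟨_, rfl⟩
  obtain ⟨e₀, he₀⟩ : ∃ e₀ : H, e₀ = g i₀.castSucc := ⟨_, rfl⟩
  have hne : i₀.castSucc ≠ Fin.last k := (Fin.castSucc_lt_last i₀).ne
  have he₀norm : ‖e₀‖ = 1 := by rw [he₀]; exact hg.1 _
  have horth : ⟪e₀, f⟫_ℂ = 0 := by rw [he₀, hfdef]; exact hg.2 hne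
  have horth' : ⟪f, e₀⟫_ℂ = 0 := by rw [← inner_conj_symm, horth, map_zero]
  have hff : ⟪f, f⟫_ℂ = 1 := by
    rw [inner_self_eq_norm_sq_to_K, hfnorm]; simp
  have hee : ⟪e₀, e₀⟫_ℂ = 1 := by
    rw [inner_self_eq_norm_sq_to_K, he₀norm]; simp
  have hs2 : (0:ℝ) < Real.sqrt 2 := by positivity
  have hx0norm : ‖e₀ + f‖ = Real.sqrt 2 := by
    have hsq : ‖e₀ + f‖ ^ 2 = 2 := by
      rw [norm_add_sq (𝕜 := ℂ), horth, he₀norm, hfnorm]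
      norm_num
    rw [← Real.sqrt_sq (norm_nonneg _), hsq]
  obtain ⟨x₀, hx₀⟩ : ∃ x₀ : H, x₀ = ((Real.sqrt 2 : ℝ) : ℂ)⁻¹ • (e₀ + f) := ⟨_, rfl⟩
  have hx0unit : ‖x₀‖ = 1 := by
    rw [hx₀, norm_smul, norm_inv, Complex.norm_real, Real.norm_eq_abs,
      abs_of_nonneg hs2.le, hx0norm, inv_mul_cancel₀ hs2.ne']
  have hq₀mem : (x₀, innerSL ℂ x₀) ∈ dualPairs ℂ H := unit_mem_dualPairs hx0unit
  have hfx₀ : ⟪f, x₀⟫_ℂ = ((Real.sqrt 2 : ℝ) : ℂ)⁻¹ := by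
    rw [hx₀, inner_smul_right, inner_add_right, horth', hff]
    simp
  have hconj : (starRingEnd ℂ) ((Real.sqrt 2 : ℝ) : ℂ)⁻¹ = ((Real.sqrt 2 : ℝ) : ℂ)⁻¹ := by
    rw [map_inv₀, Complex.conj_ofReal]
  have hA₀ : ∀ i : Fin k, ⟪x₀, g i.castSucc⟫_ℂ
      = if i = i₀ then ((Real.sqrt 2 : ℝ) : ℂ)⁻¹ else 0 := by
    intro i
    rw [hx₀, inner_smul_left, inner_add_left, hconj]
    by_cases hii : i = i₀
    · subst hii
      rw [← he₀, hee, if_pos rfl]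
      have : ⟪f, e₀⟫_ℂ = 0 := horth'
      rw [he₀] at this ⊢
      rw [this]
      simp
    · have h1 : ⟪e₀, g i.castSucc⟫_ℂ = 0 := by
        rw [he₀]
        exact hg.2 fun hcon => hii (Fin.castSucc_injective _ hcon).symm
      have h2 : ⟪f, g i.castSucc⟫_ℂ = 0 := by
        rw [hfdef]
        exact hg.2 fun hcon => (Fin.castSucc_lt_last i).ne' hcon
      rw [if_neg hii, h1, h2]
      simp
  have h22 : (Real.sqrt 2)⁻¹ * (Real.sqrt 2)⁻¹ = 2⁻¹ := by
    rw [← mul_inv, Real.mul_self_sqrt (by norm_num : (0:ℝ) ≤ 2)]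
  have hmemval : (∑ i, ‖(innerSL ℂ x₀) (S i x₀)‖ ^ (2:ℝ)) ^ (1/(2:ℝ)) = c / 2 := by
    have := hval (x₀, innerSL ℂ x₀) hq₀mem
    simp only at this
    rw [this, hfx₀]
    have hsum : (∑ i : Fin k, ‖⟪x₀, g i.castSucc⟫_ℂ‖ ^ 2) = 2⁻¹ := by
      have hterm2 : ∀ i : Fin k, ‖⟪x₀, g i.castSucc⟫_ℂ‖ ^ 2
          = if i = i₀ then 2⁻¹ else 0 := by
        intro i
        rw [hA₀ i]
        by_cases hii : i = i₀
        · rw [if_pos hii, if_pos hii, norm_inv, Complex.norm_real, Real.norm_eq_abs,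
            abs_of_nonneg hs2.le, inv_pow, Real.sq_sqrt (by norm_num : (0:ℝ) ≤ 2)]
        · rw [if_neg hii, if_neg hii]
          simp
      rw [Finset.sum_congr rfl fun i _ => hterm2 i,
        Finset.sum_ite_eq' Finset.univ i₀ fun _ => (2:ℝ)⁻¹]
      simp
    rw [hsum, norm_inv, Complex.norm_real, Real.norm_eq_abs, abs_of_nonneg hs2.le,
      Real.sqrt_inv 2]
    calc (Real.sqrt 2)⁻¹ * c * (Real.sqrt 2)⁻¹
        = ((Real.sqrt 2)⁻¹ * (Real.sqrt 2)⁻¹) * c := by ring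
      _ = 2⁻¹ * c := by rw [h22]
      _ = c / 2 := by ring
  have hmem : c / 2 ∈ {r | ∃ q ∈ dualPairs ℂ H,
      r = (∑ i, ‖q.2 (S i q.1)‖ ^ (2:ℝ)) ^ (1/(2:ℝ))} :=
    ⟨(x₀, innerSL ℂ x₀), hq₀mem, hmemval.symm⟩
  rw [htarget]
  refine le_antisymm (csSup_le ⟨c/2, hmem⟩ ?_) (le_csSup ⟨c/2, ?_⟩ hmem)
  · rintro r ⟨q, hq, rfl⟩; exact hub q hq
  · rintro r ⟨q, hq, rfl⟩; exact hub q hq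

end Tuple

section Half
variable {H : Type*} [NormedAddCommGroup H] [InnerProductSpace ℂ H]

private lemma four_term_bound (a b c d : ℂ) :
    ‖a - b + Complex.I * c - Complex.I * d‖ ≤ ‖a‖ + ‖b‖ + ‖c‖ + ‖d‖ := by
  calc ‖a - b + Complex.I * c - Complex.I * d‖
      ≤ ‖a - b + Complex.I * c‖ + ‖Complex.I * d‖ := norm_sub_le _ _
    _ ≤ (‖a - b‖ + ‖Complex.I * c‖) + ‖Complex.I * d‖ := by gcongr; exact norm_add_le _ _
    _ ≤ ((‖a‖ + ‖b‖) + ‖Complex.I * c‖) + ‖Complex.I * d‖ := by gcongr; exact norm_sub_le _ _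
    _ = ‖a‖ + ‖b‖ + ‖c‖ + ‖d‖ := by
        rw [norm_mul, norm_mul, Complex.norm_I, one_mul, one_mul]

lemma norm_le_two_mul_w {S : H →L[ℂ] H} {w : ℝ} (hw0 : 0 ≤ w)
    (hw : ∀ x : H, ‖x‖ = 1 → ‖⟪x, S x⟫_ℂ‖ ≤ w) : ‖S‖ ≤ 2 * w := by
  have hsc : ∀ z : H, ‖⟪S z, z⟫_ℂ‖ ≤ w * ‖z‖ ^ 2 := by
    intro z
    rcases eq_or_ne z 0 with rfl | hz
    · simp
    · have hnz : (0:ℝ) < ‖z‖ := norm_pos_iff.mpr hz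
      have hu : ‖((‖z‖ : ℂ))⁻¹ • z‖ = 1 := by
        rw [norm_smul, norm_inv, Complex.norm_real, norm_norm, inv_mul_cancel₀ hnz.ne']
      have h1 := hw _ hu
      rw [map_smul, inner_smul_left, inner_smul_right] at h1
      simp only [norm_mul, RCLike.norm_conj, norm_inv, Complex.norm_real, norm_norm] at h1
      have hflip : ‖⟪z, S z⟫_ℂ‖ = ‖⟪S z, z⟫_ℂ‖ := by
        rw [← inner_conj_symm]; exact RCLike.norm_conj _
      rw [hflip] at h1
      have h2 : ‖z‖⁻¹ * ‖z‖⁻¹ * ‖⟪S z, z⟫_ℂ‖ ≤ w := by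
        calc ‖z‖⁻¹ * ‖z‖⁻¹ * ‖⟪S z, z⟫_ℂ‖ = ‖z‖⁻¹ * (‖z‖⁻¹ * ‖⟪S z, z⟫_ℂ‖) := by ring
          _ ≤ w := h1
      calc ‖⟪S z, z⟫_ℂ‖ = ‖z‖^2 * (‖z‖⁻¹ * ‖z‖⁻¹ * ‖⟪S z, z⟫_ℂ‖) := by
            field_simp
        _ ≤ ‖z‖^2 * w := mul_le_mul_of_nonneg_left h2 (by positivity)
        _ = w * ‖z‖^2 := by ring
  have hunit : ∀ x : H, ‖x‖ = 1 → ‖S x‖ ≤ 2 * w := by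
    intro x hx
    rcases eq_or_ne (S x) 0 with h0 | h0
    · rw [h0]; simpa using by positivity
    · have hnSx : (0:ℝ) < ‖S x‖ := norm_pos_iff.mpr h0
      obtain ⟨y, hny, hval⟩ : ∃ y : H, ‖y‖ = 1 ∧ ‖⟪S x, y⟫_ℂ‖ = ‖S x‖ := by
        refine ⟨((‖S x‖ : ℂ))⁻¹ • S x, ?_, ?_⟩
        · rw [norm_smul, norm_inv, Complex.norm_real, norm_norm, inv_mul_cancel₀ hnSx.ne']
        · rw [inner_smul_right, norm_mul, norm_inv, Complex.norm_real, norm_norm,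
            inner_self_eq_norm_sq_to_K, norm_pow]
          simp only [RCLike.norm_ofReal, abs_norm]
          field_simp
      have hpol := inner_map_polarization (S : H →ₗ[ℂ] H) y x
      simp only [ContinuousLinearMap.coe_coe] at hpol
      have hb : ‖⟪S x, y⟫_ℂ‖ ≤ (w * ‖y + x‖^2 + w * ‖y - x‖^2 + w * ‖y + Complex.I • x‖^2
            + w * ‖y - Complex.I • x‖^2) / 4 := by
        rw [hpol, norm_div]
        have h4 : ‖(4:ℂ)‖ = 4 := by norm_num
        rw [h4]
        gcongr
        refine (four_term_bound _ _ _ _).trans ?_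
        gcongr <;> exact hsc _
      have hpar1 := parallelogram_law_with_norm ℂ y x
      have hpar2 := parallelogram_law_with_norm ℂ y (Complex.I • x)
      have hIx : ‖Complex.I • x‖ = ‖x‖ := by rw [norm_smul, Complex.norm_I, one_mul]
      rw [hny, hx] at hpar1
      rw [hIx, hny, hx] at hpar2
      rw [hval] at hb
      calc ‖S x‖ ≤ (w * ‖y + x‖^2 + w * ‖y - x‖^2 + w * ‖y + Complex.I • x‖^2
            + w * ‖y - Complex.I • x‖^2) / 4 := hb
        _ ≤ 2 * w := by nlinarith [hpar1, hpar2]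
  refine S.opNorm_le_bound (by positivity) ?_
  intro x
  rcases eq_or_ne x 0 with rfl | hx
  · simp
  · have hnx : (0:ℝ) < ‖x‖ := norm_pos_iff.mpr hx
    have hu : ‖((‖x‖ : ℂ))⁻¹ • x‖ = 1 := by
      rw [norm_smul, norm_inv, Complex.norm_real, norm_norm, inv_mul_cancel₀ hnx.ne']
    have h1 := hunit _ hu
    rw [map_smul, norm_smul, norm_inv, Complex.norm_real, norm_norm] at h1
    calc ‖S x‖ = ‖x‖ * (‖x‖⁻¹ * ‖S x‖) := by field_simp
      _ ≤ ‖x‖ * (2 * w) := mul_le_mul_of_nonneg_left h1 hnx.le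
      _ = 2 * w * ‖x‖ := by ring

end Half

section Index
variable {H : Type*} [NormedAddCommGroup H] [InnerProductSpace ℂ H] [CompleteSpace H]
  [Nontrivial H]

lemma radius_lower_bound {k : ℕ} (hk : 0 < k) (S : Fin k → H →L[ℂ] H)
    (hSnorm : jointOpNorm 2 S = 1) :
    1 / (2 * Real.sqrt k) ≤ jointNumRadius 2 S := by
  haveI : Nonempty (Fin k) := Fin.pos_iff_nonempty.mp hk
  have hkpos : (0:ℝ) < (k:ℝ) := by exact_mod_cast hk
  have hsk : (0:ℝ) < Real.sqrt k := Real.sqrt_pos.mpr hkpos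
  obtain ⟨u, hu⟩ : ∃ u : H, ‖u‖ = 1 := by
    obtain ⟨x, hx⟩ := exists_ne (0 : H)
    have hnx : (0:ℝ) < ‖x‖ := norm_pos_iff.mpr hx
    exact ⟨((‖x‖ : ℂ))⁻¹ • x, by
      rw [norm_smul, norm_inv, Complex.norm_real, norm_norm, inv_mul_cancel₀ hnx.ne']⟩
  set B : ℝ := Real.sqrt (∑ i, ‖S i‖ ^ 2) with hB
  -- every element of the opNorm set is ≤ B
  have hopelt : ∀ x : H, ‖x‖ = 1 → (∑ i, ‖S i x‖ ^ (2:ℝ)) ^ (1/(2:ℝ)) ≤ B := by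
    intro x hx
    rw [sum_sq_half, hB]
    apply Real.sqrt_le_sqrt
    apply Finset.sum_le_sum
    intro i _
    have h1 : ‖S i x‖ ≤ ‖S i‖ := by
      calc ‖S i x‖ ≤ ‖S i‖ * ‖x‖ := (S i).le_opNorm x
        _ = ‖S i‖ := by rw [hx, mul_one]
    exact pow_le_pow_left₀ (norm_nonneg _) h1 2
  -- 1 ≤ B
  have hone : 1 ≤ B := by
    rw [← hSnorm]
    unfold jointOpNorm
    refine csSup_le ⟨_, ⟨u, hu, rfl⟩⟩ ?_
    rintro r ⟨x, hx, rfl⟩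
    exact hopelt x hx
  -- there is i₀ with (√k)⁻¹ ≤ ‖S i₀‖
  obtain ⟨i₀, hi₀⟩ : ∃ i₀ : Fin k, (Real.sqrt k)⁻¹ ≤ ‖S i₀‖ := by
    by_contra h
    push_neg at h
    have hsum : (∑ i, ‖S i‖ ^ 2) < ∑ _i : Fin k, ((Real.sqrt k)⁻¹)^2 := by
      apply Finset.sum_lt_sum_of_nonempty Finset.univ_nonempty
      intro i _
      exact pow_lt_pow_left₀ (h i) (norm_nonneg _) (by norm_num)
    rw [Finset.sum_const, Finset.card_univ, Fintype.card_fin, nsmul_eq_mul, inv_pow,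
      Real.sq_sqrt hkpos.le, mul_inv_cancel₀ hkpos.ne'] at hsum
    have hB2 : B ^ 2 < 1 := by
      rw [hB, Real.sq_sqrt (Finset.sum_nonneg fun i _ => by positivity)]
      exact hsum
    nlinarith [hone]
  -- the numRadius set is bounded above by B
  have hradelt : ∀ q ∈ dualPairs ℂ H, (∑ i, ‖q.2 (S i q.1)‖ ^ (2:ℝ)) ^ (1/(2:ℝ)) ≤ B := by
    intro q hq
    rw [sum_sq_half, hB]
    apply Real.sqrt_le_sqrt
    apply Finset.sum_le_sum
    intro i _
    have h1 : ‖q.2 (S i q.1)‖ ≤ ‖S i‖ := by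
      calc ‖q.2 (S i q.1)‖ ≤ ‖q.2‖ * ‖S i q.1‖ := q.2.le_opNorm _
        _ = ‖S i q.1‖ := by rw [hq.2.1, one_mul]
        _ ≤ ‖S i‖ * ‖q.1‖ := (S i).le_opNorm _
        _ = ‖S i‖ := by rw [hq.1, mul_one]
    exact pow_le_pow_left₀ (norm_nonneg _) h1 2
  have hbdd : BddAbove {r | ∃ q ∈ dualPairs ℂ H,
      r = (∑ i, ‖q.2 (S i q.1)‖ ^ (2:ℝ)) ^ (1/(2:ℝ))} := by
    refine ⟨B, ?_⟩
    rintro r ⟨q, hq, rfl⟩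
    exact hradelt q hq
  obtain ⟨W, hW⟩ : ∃ W : ℝ, W = jointNumRadius 2 S := ⟨_, rfl⟩
  rw [← hW]
  have hWsup : W = sSup {r | ∃ q ∈ dualPairs ℂ H,
      r = (∑ i, ‖q.2 (S i q.1)‖ ^ (2:ℝ)) ^ (1/(2:ℝ))} := hW
  have hW0 : 0 ≤ W := by
    have hmem : (∑ i, ‖(innerSL ℂ u) (S i u)‖ ^ (2:ℝ)) ^ (1/(2:ℝ)) ∈
        {r | ∃ q ∈ dualPairs ℂ H, r = (∑ i, ‖q.2 (S i q.1)‖ ^ (2:ℝ)) ^ (1/(2:ℝ))} :=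
      ⟨(u, innerSL ℂ u), unit_mem_dualPairs hu, rfl⟩
    have h5 := le_csSup hbdd hmem
    rw [← hWsup] at h5
    refine le_trans ?_ h5
    positivity
  have hw : ∀ x : H, ‖x‖ = 1 → ‖⟪x, S i₀ x⟫_ℂ‖ ≤ W := by
    intro x hx
    have hmem : (∑ i, ‖(innerSL ℂ x) (S i x)‖ ^ (2:ℝ)) ^ (1/(2:ℝ)) ∈
        {r | ∃ q ∈ dualPairs ℂ H, r = (∑ i, ‖q.2 (S i q.1)‖ ^ (2:ℝ)) ^ (1/(2:ℝ))} :=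
      ⟨(x, innerSL ℂ x), unit_mem_dualPairs hx, rfl⟩
    have h2 := le_csSup hbdd hmem
    rw [← hWsup] at h2
    refine le_trans ?_ h2
    rw [sum_sq_half]
    rw [show (⟪x, S i₀ x⟫_ℂ) = (innerSL ℂ x) (S i₀ x) from rfl]
    rw [← Real.sqrt_sq (norm_nonneg ((innerSL ℂ x) (S i₀ x)))]
    apply Real.sqrt_le_sqrt
    exact Finset.single_le_sum (f := fun i => ‖(innerSL ℂ x) (S i x)‖ ^ 2)
      (fun i _ => by positivity) (Finset.mem_univ i₀)
  have hnorm2W : ‖S i₀‖ ≤ 2 * W := norm_le_two_mul_w hW0 hw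
  calc 1 / (2 * Real.sqrt k) = (Real.sqrt k)⁻¹ / 2 := by field_simp
    _ ≤ ‖S i₀‖ / 2 := by linarith [hi₀]
    _ ≤ W := by linarith [hnorm2W]

lemma jointNumIndex_eq {k : ℕ} (hk : 0 < k) (S : Fin k → H →L[ℂ] H)
    (h1 : jointOpNorm 2 S = 1) (h2 : jointNumRadius 2 S = 1 / (2 * Real.sqrt k)) :
    jointNumIndex 2 k ℂ H = 1 / (2 * Real.sqrt k) := by
  have hmem : (1 / (2 * Real.sqrt k)) ∈
      {r | ∃ T : Fin k → H →L[ℂ] H, jointOpNorm 2 T = 1 ∧ r = jointNumRadius 2 T} :=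
    ⟨S, h1, h2.symm⟩
  have hlb : ∀ r ∈ {r | ∃ T : Fin k → H →L[ℂ] H,
      jointOpNorm 2 T = 1 ∧ r = jointNumRadius 2 T}, 1 / (2 * Real.sqrt k) ≤ r := by
    rintro r ⟨T, hT1, rfl⟩
    exact radius_lower_bound hk T hT1
  exact le_antisymm (csInf_le ⟨_, hlb⟩ hmem) (le_csInf ⟨_, hmem⟩ hlb)

end Index


section Euc
variable {m k : ℕ}

private def eidx (hkm : k < m) : Fin (k+1) → Fin m :=
  Fin.snoc (fun t : Fin k => (⟨(t:ℕ), by omega⟩ : Fin m)) ⟨m-1, by omega⟩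

private lemma eidx_last (hkm : k < m) : eidx hkm (Fin.last k) = ⟨m-1, by omega⟩ := by
  simp [eidx]

private lemma eidx_castSucc (hkm : k < m) (i : Fin k) :
    eidx hkm i.castSucc = ⟨(i:ℕ), by omega⟩ := by
  simp [eidx]

private lemma eidx_inj (hkm : k < m) : Function.Injective (eidx hkm) := by
  intro a b hab
  have hv : ∀ t : Fin (k+1), ((eidx hkm t : Fin m) : ℕ)
      = if (t:ℕ) = k then m - 1 else (t:ℕ) := by
    intro t
    refine Fin.lastCases ?_ (fun s => ?_) t
    · rw [eidx_last]; simp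
    · rw [eidx_castSucc]
      have := s.isLt
      simp only [Fin.coe_castSucc]
      rw [if_neg (by omega)]
  have h1 := hv a
  have h2 := hv b
  rw [hab, h2] at h1
  have ha := a.isLt; have hb := b.isLt
  rw [Fin.ext_iff]
  split_ifs at h1 <;> omega

private lemma euc_orthonormal (hkm : k < m) :
    Orthonormal ℂ (fun j : Fin (k+1) => EuclideanSpace.single (eidx hkm j) (1:ℂ)) := by
  rw [orthonormal_iff_ite]
  intro i j
  rw [EuclideanSpace.inner_single_left, EuclideanSpace.single_apply]
  simp only [map_one, one_mul]
  by_cases h : i = j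
  · subst h; simp
  · rw [if_neg (fun hc => h (eidx_inj hkm hc)), if_neg h]

private lemma euc_hS (hm : 3 ≤ m) (hkm : k < m)
    (T : Fin k → EuclideanSpace ℂ (Fin m) →L[ℂ] EuclideanSpace ℂ (Fin m))
    (hT : ∀ (i : Fin k) (x : EuclideanSpace ℂ (Fin m)) (j : Fin m),
      T i x j = if (j : ℕ) = (i : ℕ)
        then x ⟨m - 1, Nat.sub_one_lt (by omega)⟩ / ((Real.sqrt k : ℝ) : ℂ) else 0) :
    ∀ (i : Fin k) (x : EuclideanSpace ℂ (Fin m)),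
      T i x = (⟪(fun j : Fin (k+1) => EuclideanSpace.single (eidx hkm j) (1:ℂ))
          (Fin.last k), x⟫_ℂ * ((Real.sqrt k)⁻¹ : ℝ)) •
        (fun j : Fin (k+1) => EuclideanSpace.single (eidx hkm j) (1:ℂ)) i.castSucc := by
  intro i x
  ext j
  rw [hT]
  simp only [eidx_last, eidx_castSucc, EuclideanSpace.inner_single_left, map_one, one_mul,
    PiLp.smul_apply, EuclideanSpace.single_apply, smul_eq_mul, mul_ite, mul_zero, mul_one]
  by_cases hj : (j : ℕ) = (i : ℕ)
  · rw [if_pos hj, if_pos (by rw [Fin.ext_iff]; exact hj), div_eq_mul_inv]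
    push_cast
    ring
  · rw [if_neg hj, if_neg (fun hc => hj (by rw [Fin.ext_iff] at hc; exact hc))]
end Euc


section L2
variable {k : ℕ}

private noncomputable def l2g (j : Fin (k+1)) : lp (fun _ : ℕ => ℂ) 2 :=
  lp.single 2 (j : ℕ) (1:ℂ)

private lemma l2_orthonormal : Orthonormal ℂ (l2g (k := k)) := by
  rw [orthonormal_iff_ite]
  intro i j
  unfold l2g
  rw [lp.inner_single_left, lp.single_apply]
  by_cases h : i = j
  · subst h; simp
  · have hne : (i:ℕ) ≠ (j:ℕ) := fun hc => h (Fin.val_injective hc)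
    rw [Pi.single_apply, if_neg hne, if_neg h]
    simp

private noncomputable def l2S (i : Fin k) : lp (fun _ : ℕ => ℂ) 2 →L[ℂ] lp (fun _ : ℕ => ℂ) 2 :=
  (innerSL ℂ (l2g (Fin.last k))).smulRight
    ((((Real.sqrt k)⁻¹ : ℝ) : ℂ) • l2g i.castSucc)

private lemma l2S_apply (i : Fin k) (x : lp (fun _ : ℕ => ℂ) 2) :
    l2S i x = (⟪l2g (Fin.last k), x⟫_ℂ * ((Real.sqrt k)⁻¹ : ℝ)) • l2g i.castSucc := by
  rw [l2S, ContinuousLinearMap.smulRight_apply, innerSL_apply_apply, smul_smul]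

private instance : Nontrivial (lp (fun _ : ℕ => ℂ) 2) := by
  refine nontrivial_of_ne (l2g (k := 0) (Fin.last 0)) 0 fun hc => ?_
  have h1 : ‖l2g (k := 0) (Fin.last 0)‖ = 1 := l2_orthonormal.1 _
  rw [hc, norm_zero] at h1
  norm_num at h1
end L2


set_option maxHeartbeats 1000000 in
theorem stmt18 {m k : ℕ} (hm : 3 ≤ m) (hk1 : 1 ≤ k) (hkm : k < m)
    (T : Fin k → EuclideanSpace ℂ (Fin m) →L[ℂ] EuclideanSpace ℂ (Fin m))
    (hT : ∀ (i : Fin k) (x : EuclideanSpace ℂ (Fin m)) (j : Fin m),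
      T i x j = if (j : ℕ) = (i : ℕ)
        then x ⟨m - 1, by omega⟩ / ((Real.sqrt k : ℝ) : ℂ) else 0) :
    jointOpNorm 2 T = 1 ∧ jointNumRadius 2 T = 1 / (2 * Real.sqrt k) ∧
    jointNumIndex 2 k ℂ (EuclideanSpace ℂ (Fin m)) = 1 / (2 * Real.sqrt k) ∧
    jointNumIndex 2 k ℂ (lp (fun _ : ℕ => ℂ) 2) = 1 / (2 * Real.sqrt k) := by
  have hk : 0 < k := hk1
  haveI : Nontrivial (EuclideanSpace ℂ (Fin m)) := by
    refine nontrivial_of_ne (EuclideanSpace.single (⟨0, by omega⟩ : Fin m) (1:ℂ)) 0 fun hc => ?_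
    have h1 : ‖EuclideanSpace.single (⟨0, by omega⟩ : Fin m) (1:ℂ)‖ = 1 := by
      rw [EuclideanSpace.norm_single, norm_one]
    rw [hc, norm_zero] at h1
    norm_num at h1
  have hg := euc_orthonormal (k := k) (m := m) hkm
  have hS := euc_hS hm hkm T hT
  have h1 : jointOpNorm 2 T = 1 :=
    tuple_opNorm (fun j : Fin (k+1) => EuclideanSpace.single (eidx hkm j) (1:ℂ)) T hk hg hS
  have h2 : jointNumRadius 2 T = 1 / (2 * Real.sqrt k) :=
    tuple_numRadius (fun j : Fin (k+1) => EuclideanSpace.single (eidx hkm j) (1:ℂ)) T hk hg hS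
  refine ⟨h1, h2, jointNumIndex_eq hk T h1 h2, ?_⟩
  have hgl := l2_orthonormal (k := k)
  have hSl : ∀ (i : Fin k) x, l2S i x
      = (⟪l2g (Fin.last k), x⟫_ℂ * ((Real.sqrt k)⁻¹ : ℝ)) • l2g i.castSucc := l2S_apply
  have h1l : jointOpNorm 2 (l2S (k := k)) = 1 := tuple_opNorm l2g l2S hk hgl hSl
  have h2l : jointNumRadius 2 (l2S (k := k)) = 1 / (2 * Real.sqrt k) :=
    tuple_numRadius l2g l2S hk hgl hSl
  exact jointNumIndex_eq hk l2S h1l h2l
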